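/- Let n ≥ 1 and write n = 2^{k₀} · p₁^{k₁} ⋯ p_l^{k_l} where p₁, …, p_l are distinct odd primes, k₀ ≥ 0 and kᵢ ≥ 1 for 1 ≤ i ≤ l. Then the number of equivalence classes of ℤ/nℤ under the square-multiplication relation equals c(n) := ε(k₀) · ∏_{i=1}^{l} (2kᵢ + 1), where ε(0) = 1, ε(1) = 2, ε(2) = 4, and ε(k₀) = 4(k₀ − 1) for k₀ ≥ 3. (Equivalently, there are exactly c(n) pointed fusion categories of the form Vect_{ℤ/nℤ}^{ζ} up to monoidal equivalence.) -/

import Mathlib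

open scoped BigOperators

/-- The square-multiplication relation on `ℤ/nℤ`: `a ∼ b` iff `b = j² · a` for some unit `j`. -/
def sqRel (n : ℕ) (a b : ZMod n) : Prop :=
  ∃ j : (ZMod n)ˣ, b = (j : ZMod n) ^ 2 * a

namespace SQAux

variable {M N : Type*} [CommMonoid M] [CommMonoid N]

/-- The square-multiplication relation on a commutative monoid. -/
def rel (M : Type*) [CommMonoid M] (a b : M) : Prop :=
  ∃ j : Mˣ, b = (j : M) ^ 2 * a

theorem rel_refl (a : M) : rel M a a := ⟨1, by simp⟩

theorem rel_symm {a b : M} (h : rel M a b) : rel M b a := by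
  obtain ⟨j, rfl⟩ := h
  exact ⟨j⁻¹, by rw [← mul_assoc, ← mul_pow, Units.inv_mul, one_pow, one_mul]⟩

theorem rel_trans {a b c : M} (h1 : rel M a b) (h2 : rel M b c) : rel M a c := by
  obtain ⟨j, rfl⟩ := h1
  obtain ⟨i, rfl⟩ := h2
  exact ⟨i * j, by rw [← mul_assoc, ← mul_pow, Units.val_mul]⟩

theorem rel_equivalence : Equivalence (rel M) :=
  ⟨rel_refl, rel_symm, rel_trans⟩

theorem mk_eq_mk_iff {a b : M} :
    Quot.mk (rel M) a = Quot.mk (rel M) b ↔ rel M a b := by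
  rw [Quot.eq]
  exact rel_equivalence.eqvGen_iff

theorem rel_map (e : M ≃* N) {a b : M} (h : rel M a b) : rel N (e a) (e b) := by
  obtain ⟨j, rfl⟩ := h
  exact ⟨Units.map e.toMonoidHom j, by simp⟩

/-- Transport the quotient along a `MulEquiv`. -/
def quotCongr (e : M ≃* N) : Quot (rel M) ≃ Quot (rel N) :=
  Quot.congr e.toEquiv fun a b =>
    ⟨rel_map e, fun h => by simpa using rel_map e.symm h⟩

/-- A unit of a product from a pair of units. -/
def pairUnit (u : Mˣ) (v : Nˣ) : (M × N)ˣ :=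
  ⟨((u : M), (v : N)), ((u⁻¹ : Mˣ), (v⁻¹ : Nˣ)),
    by simp [Prod.ext_iff], by simp [Prod.ext_iff]⟩

theorem pairUnit_val (u : Mˣ) (v : Nˣ) : ((pairUnit u v : (M × N)ˣ) : M × N) = ((u : M), (v : N)) := rfl

/-- Pairing map on quotients. -/
def mkPair : Quot (rel M) → Quot (rel N) → Quot (rel (M × N)) :=
  Quot.lift
    (fun a => Quot.lift (fun b => Quot.mk (rel (M × N)) (a, b))
      (fun b b' hb => by
        obtain ⟨j, rfl⟩ := hb
        exact Quot.sound ⟨pairUnit 1 j, by simp [pairUnit, Prod.ext_iff, Prod.pow_def]⟩))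
    (fun a a' ha => by
      funext qb
      induction qb using Quot.ind with
      | _ b =>
        obtain ⟨j, rfl⟩ := ha
        exact Quot.sound ⟨pairUnit j 1, by simp [pairUnit, Prod.ext_iff, Prod.pow_def]⟩)

/-- The quotient of a product is the product of the quotients. -/
noncomputable def quotProdEquiv :
    Quot (rel (M × N)) ≃ Quot (rel M) × Quot (rel N) where
  toFun := Quot.lift (fun p => (Quot.mk (rel M) p.1, Quot.mk (rel N) p.2))
    (by
      rintro ⟨a₁, a₂⟩ ⟨b₁, b₂⟩ ⟨j, hj⟩
      rw [Prod.ext_iff] at hj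
      obtain ⟨h1, h2⟩ := hj
      refine Prod.ext ?_ ?_
      · exact Quot.sound ⟨Units.map (MonoidHom.fst M N) j, by simpa using h1⟩
      · exact Quot.sound ⟨Units.map (MonoidHom.snd M N) j, by simpa using h2⟩)
  invFun := fun q => mkPair q.1 q.2
  left_inv := by
    rintro ⟨⟨a, b⟩⟩
    rfl
  right_inv := by
    rintro ⟨⟨a⟩, ⟨b⟩⟩
    rfl

/-- The key counting quantity. -/
noncomputable def Ncard (q : ℕ) : ℕ := Nat.card (Quot (rel (ZMod q)))

theorem Ncard_one : Ncard 1 = 1 := by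
  rw [Ncard, Nat.card_eq_one_iff_unique]
  constructor
  · constructor
    rintro ⟨a⟩ ⟨b⟩
    exact congrArg _ (Subsingleton.elim a b)
  · exact ⟨Quot.mk _ 0⟩

theorem Ncard_mul {m n : ℕ} (h : m.Coprime n) : Ncard (m * n) = Ncard m * Ncard n := by
  rw [Ncard, Nat.card_congr
    ((quotCongr (ZMod.chineseRemainder h).toMulEquiv).trans quotProdEquiv), Nat.card_prod]
  rfl

theorem Ncard_prod {ι : Type*} (s : Finset ι) (f : ι → ℕ)
    (hcop : (s : Set ι).Pairwise fun i j => (f i).Coprime (f j)) :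
    Ncard (∏ i ∈ s, f i) = ∏ i ∈ s, Ncard (f i) := by
  classical
  induction s using Finset.induction with
  | empty => simpa using Ncard_one
  | @insert a s ha ih =>
    rw [Finset.prod_insert ha, Finset.prod_insert ha,
      Ncard_mul (Nat.Coprime.prod_right fun i hi =>
        hcop (Finset.mem_insert_self a s) (Finset.mem_insert_of_mem hi)
          (fun hne => ha (hne ▸ hi))),
      ih (hcop.mono (by simp [Set.subset_def]; tauto))]

end SQAux

namespace SQAux

section PrimePower

variable (p k : ℕ)

/-- Embedding of `ZMod p^k` into `ZMod p^(k+1)` as the non-units (multiples of `p`). -/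
def iota (x : ZMod (p ^ k)) : ZMod (p ^ (k + 1)) := ((p * x.val : ℕ) : ZMod (p ^ (k + 1)))

variable {p k} (hp : p.Prime)
include hp

theorem iota_injective : Function.Injective (iota p k) := by
  haveI : NeZero (p ^ k) := ⟨pow_ne_zero _ hp.pos.ne'⟩
  intro x y h
  have hx : p * x.val < p ^ (k + 1) := by
    have := ZMod.val_lt x
    calc p * x.val < p * p ^ k := (Nat.mul_lt_mul_left hp.pos).mpr this
    _ = p ^ (k + 1) := by ring
  have hy : p * y.val < p ^ (k + 1) := by
    have := ZMod.val_lt y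
    calc p * y.val < p * p ^ k := (Nat.mul_lt_mul_left hp.pos).mpr this
    _ = p ^ (k + 1) := by ring
  have := congrArg ZMod.val h
  rw [iota, iota, ZMod.val_cast_of_lt hx, ZMod.val_cast_of_lt hy] at this
  have hval : x.val = y.val := Nat.eq_of_mul_eq_mul_left hp.pos this
  haveI : NeZero (p ^ k) := ⟨pow_ne_zero _ hp.pos.ne'⟩
  calc x = ((x.val : ℕ) : ZMod (p ^ k)) := (ZMod.natCast_rightInverse x).symm
  _ = ((y.val : ℕ) : ZMod (p ^ k)) := by rw [hval]
  _ = y := ZMod.natCast_rightInverse y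

theorem iota_smul (c : ZMod (p ^ (k + 1))) (x : ZMod (p ^ k)) :
    c * iota p k x =
      iota p k ((ZMod.castHom (pow_dvd_pow p k.le_succ) (ZMod (p ^ k)) c) * x) := by
  haveI : NeZero (p ^ (k + 1)) := ⟨pow_ne_zero _ hp.pos.ne'⟩
  haveI : NeZero (p ^ k) := ⟨pow_ne_zero _ hp.pos.ne'⟩
  have hc : (ZMod.castHom (pow_dvd_pow p k.le_succ) (ZMod (p ^ k)) c)
      = ((c.val : ℕ) : ZMod (p ^ k)) := by
    rw [ZMod.castHom_apply, ZMod.natCast_val]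
  have hx : x = ((x.val : ℕ) : ZMod (p ^ k)) := (ZMod.natCast_rightInverse x).symm
  have hcc : c = ((c.val : ℕ) : ZMod (p ^ (k + 1))) := (ZMod.natCast_rightInverse c).symm
  rw [hc]
  have hy : (((c.val : ℕ) : ZMod (p ^ k)) * x) = (((c.val * x.val : ℕ)) : ZMod (p ^ k)) := by
    rw [Nat.cast_mul, ← hx]
  rw [hy, iota, iota]
  have hv : ((c.val * x.val : ℕ) : ZMod (p ^ k)).val = (c.val * x.val) % p ^ k :=
    ZMod.val_natCast _ _
  rw [hv]
  conv_lhs => rw [hcc]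
  rw [← Nat.cast_mul, ZMod.natCast_eq_natCast_iff]
  have : (c.val * x.val) % p ^ k ≡ c.val * x.val [MOD p ^ k] := Nat.mod_modEq _ _
  have hmod : p * (c.val * x.val) ≡ p * ((c.val * x.val) % p ^ k) [MOD p * p ^ k] :=
    Nat.ModEq.mul_left' p this.symm
  have hpk : p * p ^ k = p ^ (k + 1) := by ring
  rw [hpk] at hmod
  calc c.val * (p * x.val) = p * (c.val * x.val) := by ring
  _ ≡ p * ((c.val * x.val) % p ^ k) [MOD p ^ (k + 1)] := hmod

theorem not_isUnit_iota (x : ZMod (p ^ k)) : ¬ IsUnit (iota p k x) := by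
  intro h
  rw [iota, Nat.cast_mul] at h
  have hup : IsUnit ((p : ℕ) : ZMod (p ^ (k + 1))) := isUnit_of_mul_isUnit_left h
  rw [ZMod.isUnit_iff_coprime] at hup
  have := Nat.Coprime.coprime_dvd_right (dvd_pow_self p k.succ_ne_zero) hup
  rw [Nat.Coprime, Nat.gcd_self] at this
  exact hp.one_lt.ne' this

theorem isUnit_or_iota (a : ZMod (p ^ (k + 1))) :
    IsUnit a ∨ ∃ x : ZMod (p ^ k), a = iota p k x := by
  haveI : NeZero (p ^ (k + 1)) := ⟨pow_ne_zero _ hp.pos.ne'⟩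
  by_cases h : IsUnit a
  · exact Or.inl h
  · right
    have ha : a = ((a.val : ℕ) : ZMod (p ^ (k + 1))) := (ZMod.natCast_rightInverse a).symm
    rw [ha, ZMod.isUnit_iff_coprime] at h
    rw [Nat.coprime_pow_right_iff k.succ_pos, Nat.coprime_comm,
      Nat.Prime.coprime_iff_not_dvd hp, not_not] at h
    obtain ⟨t, ht⟩ := h
    have htlt : t < p ^ k := by
      have := ZMod.val_lt a
      rw [ht] at this
      rw [pow_succ, mul_comm (p ^ k) p] at this
      exact Nat.lt_of_mul_lt_mul_left this
    refine ⟨(t : ZMod (p ^ k)), ?_⟩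
    haveI : NeZero (p ^ k) := ⟨pow_ne_zero _ hp.pos.ne'⟩
    rw [iota, ZMod.val_cast_of_lt htlt, ← ht, ← ha]

end PrimePower

end SQAux
namespace SQAux

section Step

variable {p k : ℕ} (hp : p.Prime)
include hp

/-- The subgroup of squares of units. -/
def sqSub (q : ℕ) : Subgroup (ZMod q)ˣ := (powMonoidHom 2 : (ZMod q)ˣ →* (ZMod q)ˣ).range

theorem card_step :
    Ncard (p ^ (k + 1)) =
      Nat.card ((ZMod (p ^ (k + 1)))ˣ ⧸ sqSub (p ^ (k + 1))) + Ncard (p ^ k) := by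
  haveI : NeZero (p ^ (k + 1)) := ⟨pow_ne_zero _ hp.pos.ne'⟩
  haveI : NeZero (p ^ k) := ⟨pow_ne_zero _ hp.pos.ne'⟩
  set q := p ^ (k + 1)
  -- the map from the sum
  have wdG : ∀ u v : (ZMod q)ˣ, (QuotientGroup.leftRel (sqSub q)) u v →
      Quot.mk (rel (ZMod q)) (u : ZMod q) = Quot.mk (rel (ZMod q)) (v : ZMod q) := by
    intro u v huv
    rw [QuotientGroup.leftRel_apply] at huv
    obtain ⟨w, hw⟩ := huv
    refine Quot.sound ⟨w, ?_⟩
    have : v = u * w ^ 2 := by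
      rw [show (powMonoidHom 2 w = w ^ 2) from rfl] at hw
      rw [hw, mul_inv_cancel_left]
    rw [this]
    push_cast
    ring
  have wdI : ∀ x x' : ZMod (p ^ k), rel (ZMod (p ^ k)) x x' →
      Quot.mk (rel (ZMod q)) (iota p k x) = Quot.mk (rel (ZMod q)) (iota p k x') := by
    intro x x' hxx
    obtain ⟨v, hv⟩ := hxx
    obtain ⟨u, hu⟩ := ZMod.unitsMap_surjective (pow_dvd_pow p k.le_succ) v
    refine Quot.sound ⟨u, ?_⟩
    have hcoe : ((u : ZMod q) : ZMod q) ^ 2 * iota p k x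
        = ((u ^ 2 : (ZMod q)ˣ) : ZMod q) * iota p k x := by push_cast; ring
    rw [hv, hcoe, iota_smul hp]
    congr 1
    have : (ZMod.castHom (pow_dvd_pow p k.le_succ) (ZMod (p ^ k))) ((u ^ 2 : (ZMod q)ˣ) : ZMod q)
        = ((v : ZMod (p ^ k)) ^ 2) := by
      rw [← hu]
      rw [ZMod.unitsMap_def]
      push_cast
      rw [map_pow]
      rfl
    rw [this]
  let Φ : ((ZMod q)ˣ ⧸ sqSub q) ⊕ Quot (rel (ZMod (p ^ k))) → Quot (rel (ZMod q)) :=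
    Sum.elim (Quotient.lift (fun u : (ZMod q)ˣ => Quot.mk (rel (ZMod q)) (u : ZMod q)) wdG)
      (Quot.lift (fun x => Quot.mk (rel (ZMod q)) (iota p k x)) wdI)
  have hinj : Function.Injective Φ := by
    rintro (u | x) (v | y) h
    · induction u using Quotient.inductionOn with | _ u => ?_
      induction v using Quotient.inductionOn with | _ v => ?_
      change Quot.mk _ ((u : ZMod q)) = Quot.mk _ ((v : ZMod q)) at h
      rw [mk_eq_mk_iff] at h
      obtain ⟨j, hj⟩ := h
      have huv : v = j ^ 2 * u := by
        apply Units.ext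
        push_cast
        exact hj
      congr 1
      rw [show (Quotient.mk _ u : (ZMod q)ˣ ⧸ sqSub q) = QuotientGroup.mk u from rfl,
        show (Quotient.mk _ v : (ZMod q)ˣ ⧸ sqSub q) = QuotientGroup.mk v from rfl,
        QuotientGroup.eq]
      exact ⟨j, by rw [show (powMonoidHom 2 j = j ^ 2) from rfl, huv, mul_comm (j ^ 2) u,
        inv_mul_cancel_left]⟩
    · exfalso
      induction u using Quotient.inductionOn with | _ u => ?_
      induction y using Quot.inductionOn with | _ y => ?_
      change Quot.mk _ ((u : ZMod q)) = Quot.mk _ (iota p k y) at h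
      rw [mk_eq_mk_iff] at h
      obtain ⟨j, hj⟩ := h
      refine not_isUnit_iota hp y ?_
      rw [hj]
      exact (j.isUnit.pow 2).mul u.isUnit
    · exfalso
      induction x using Quot.inductionOn with | _ x => ?_
      induction v using Quotient.inductionOn with | _ v => ?_
      change Quot.mk _ (iota p k x) = Quot.mk _ ((v : ZMod q)) at h
      rw [mk_eq_mk_iff] at h
      obtain ⟨j, hj⟩ := h
      have hcoe : ((j : ZMod q)) ^ 2 * iota p k x
          = ((j ^ 2 : (ZMod q)ˣ) : ZMod q) * iota p k x := by push_cast; ring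
      rw [hcoe, iota_smul hp] at hj
      exact not_isUnit_iota hp _ (hj ▸ v.isUnit)
    · induction x using Quot.inductionOn with | _ x => ?_
      induction y using Quot.inductionOn with | _ y => ?_
      change Quot.mk _ (iota p k x) = Quot.mk _ (iota p k y) at h
      rw [mk_eq_mk_iff] at h
      obtain ⟨j, hj⟩ := h
      have hcoe : ((j : ZMod q)) ^ 2 * iota p k x
          = ((j ^ 2 : (ZMod q)ˣ) : ZMod q) * iota p k x := by push_cast; ring
      rw [hcoe, iota_smul hp] at hj
      have heq := iota_injective hp hj
      congr 1
      refine Quot.sound ⟨ZMod.unitsMap (pow_dvd_pow p k.le_succ) j, ?_⟩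
      rw [heq]
      congr 1
      rw [ZMod.unitsMap_def]
      push_cast
      rw [map_pow]
      rfl
  have hsurj : Function.Surjective Φ := by
    rintro ⟨a⟩
    rcases isUnit_or_iota hp a with h | ⟨x, rfl⟩
    · exact ⟨Sum.inl (QuotientGroup.mk h.unit), by
        simp only [Φ, Sum.elim_inl]
        change Quot.mk _ ((h.unit : ZMod q)) = _
        rw [IsUnit.unit_spec]⟩
    · exact ⟨Sum.inr (Quot.mk _ x), rfl⟩
  rw [Ncard, ← Nat.card_congr (Equiv.ofBijective Φ ⟨hinj, hsurj⟩), Nat.card_sum]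
  rfl

end Step

end SQAux
namespace SQAux

theorem card_quot_sq (G : Type*) [CommGroup G] [Finite G] :
    Nat.card (G ⧸ (powMonoidHom 2 : G →* G).range)
      = Nat.card {x : G // x ^ 2 = 1} := by
  set f : G →* G := powMonoidHom 2
  have h2 : Nat.card f.range = f.ker.index := by
    rw [Nat.card_congr (QuotientGroup.quotientKerEquivRange f).symm.toEquiv,
      Subgroup.index_eq_card]
  have h1 : f.ker.index * Nat.card f.ker = Nat.card G := by
    rw [mul_comm]; exact Subgroup.card_mul_index f.ker
  have h3 : f.range.index * Nat.card f.range = Nat.card G := by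
    rw [mul_comm]; exact Subgroup.card_mul_index f.range
  have hker : Nat.card f.ker = Nat.card {x : G // x ^ 2 = 1} :=
    Nat.card_congr (Equiv.subtypeEquivRight fun x => by
      simp [f, MonoidHom.mem_ker, powMonoidHom_apply])
  rw [← Subgroup.index_eq_card, ← hker]
  have hne : f.ker.index ≠ 0 := Subgroup.index_ne_zero_of_finite
  apply Nat.eq_of_mul_eq_mul_left (Nat.pos_of_ne_zero hne)
  rw [mul_comm f.ker.index f.range.index, h1]
  rw [h2] at h3
  rw [h3]

theorem card_units_torsion (n : ℕ) [NeZero n] :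
    Nat.card {x : (ZMod n)ˣ // x ^ 2 = 1} = Nat.card {a : ZMod n // a ^ 2 = 1} := by
  refine Nat.card_congr ⟨fun x => ⟨(x.1 : ZMod n), ?_⟩, fun a =>
    ⟨⟨a.1, a.1, ?_, ?_⟩, ?_⟩, ?_, ?_⟩
  · have := x.2
    calc (x.1 : ZMod n) ^ 2 = ((x.1 ^ 2 : (ZMod n)ˣ) : ZMod n) := by push_cast; ring
    _ = 1 := by rw [this]; rfl
  · rw [← sq]; exact a.2
  · rw [← sq]; exact a.2
  · apply Units.ext
    rw [Units.val_pow_eq_pow_val]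
    exact a.2
  · intro x; ext; rfl
  · intro a; ext; rfl

theorem sqSub_eq (q : ℕ) :
    sqSub q = (powMonoidHom 2 : (ZMod q)ˣ →* (ZMod q)ˣ).range := rfl

/-- Combined recursion step. -/
theorem Ncard_step {p k : ℕ} (hp : p.Prime) :
    Ncard (p ^ (k + 1)) =
      Nat.card {a : ZMod (p ^ (k + 1)) // a ^ 2 = 1} + Ncard (p ^ k) := by
  haveI : NeZero (p ^ (k + 1)) := ⟨pow_ne_zero _ hp.pos.ne'⟩
  rw [card_step hp, sqSub_eq, card_quot_sq, card_units_torsion]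

end SQAux
namespace SQAux

theorem card_torsion_odd {p : ℕ} (hp : p.Prime) (hodd : Odd p) (k : ℕ) :
    Nat.card {a : ZMod (p ^ (k + 1)) // a ^ 2 = 1} = 2 := by
  haveI : NeZero (p ^ (k + 1)) := ⟨pow_ne_zero _ hp.pos.ne'⟩
  have hp3 : 3 ≤ p := by
    have h2 := hp.two_le
    obtain ⟨m, hm⟩ := hodd
    omega
  have h2q : 2 < p ^ (k + 1) := lt_of_lt_of_le (by omega) (Nat.le_self_pow k.succ_ne_zero p)
  haveI : Fact (2 < p ^ (k + 1)) := ⟨h2q⟩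
  have hP : Prime (p : ℤ) := Nat.prime_iff_prime_int.mp hp
  have key : ∀ a : ZMod (p ^ (k + 1)), a ^ 2 = 1 ↔ a = 1 ∨ a = -1 := by
    intro a
    constructor
    · intro ha
      set v : ℤ := (a.val : ℤ) with hv
      have hva : ((v : ℤ) : ZMod (p ^ (k + 1))) = a := by
        rw [hv, Int.cast_natCast]
        exact ZMod.natCast_rightInverse a
      have hdvd : ((p : ℤ)) ^ (k + 1) ∣ (v - 1) * (v + 1) := by
        have : (((v - 1) * (v + 1) : ℤ) : ZMod (p ^ (k + 1))) = 0 := by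
          push_cast [hva]
          linear_combination ha
        rw [ZMod.intCast_zmod_eq_zero_iff_dvd] at this
        exact_mod_cast this
      by_cases hd1 : (p : ℤ) ∣ v - 1
      · left
        have hd2 : ¬ (p : ℤ) ∣ v + 1 := by
          intro h2
          have h2' : (p : ℤ) ∣ 2 := by
            have := dvd_sub h2 hd1
            simpa using this
          have : (p : ℕ) ∣ 2 := by exact_mod_cast h2'
          have := Nat.le_of_dvd (by norm_num) this
          omega
        have hcop : IsCoprime ((p : ℤ) ^ (k + 1)) (v + 1) :=
          (hP.coprime_iff_not_dvd.mpr hd2).pow_left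
        have hfin : ((p : ℤ)) ^ (k + 1) ∣ v - 1 := hcop.dvd_of_dvd_mul_right hdvd
        have : ((v - 1 : ℤ) : ZMod (p ^ (k + 1))) = 0 := by
          rw [ZMod.intCast_zmod_eq_zero_iff_dvd]
          exact_mod_cast hfin
        push_cast [hva] at this
        linear_combination (norm := ring_nf) this
      · right
        have hcop : IsCoprime ((p : ℤ) ^ (k + 1)) (v - 1) :=
          (hP.coprime_iff_not_dvd.mpr hd1).pow_left
        have hfin : ((p : ℤ)) ^ (k + 1) ∣ v + 1 := hcop.dvd_of_dvd_mul_left hdvd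
        have : ((v + 1 : ℤ) : ZMod (p ^ (k + 1))) = 0 := by
          rw [ZMod.intCast_zmod_eq_zero_iff_dvd]
          exact_mod_cast hfin
        push_cast [hva] at this
        linear_combination (norm := ring_nf) this
    · rintro (rfl | rfl) <;> ring
  calc Nat.card {a : ZMod (p ^ (k + 1)) // a ^ 2 = 1}
      = Nat.card {a : ZMod (p ^ (k + 1)) // a = 1 ∨ a = -1} :=
        Nat.card_congr (Equiv.subtypeEquivRight key)
  _ = Set.ncard {a : ZMod (p ^ (k + 1)) | a = 1 ∨ a = -1} :=
        (Nat.card_coe_set_eq _)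
  _ = Set.ncard ({1, -1} : Set (ZMod (p ^ (k + 1)))) := rfl
  _ = 2 := Set.ncard_pair (fun h => ZMod.neg_one_ne_one h.symm)

end SQAux
namespace SQAux

theorem card_torsion_two_1 : Nat.card {a : ZMod (2 ^ 1) // a ^ 2 = 1} = 1 := by
  rw [Nat.card_eq_fintype_card]; decide

theorem card_torsion_two_2 : Nat.card {a : ZMod (2 ^ 2) // a ^ 2 = 1} = 2 := by
  rw [Nat.card_eq_fintype_card]; decide

theorem card_torsion_two_big (d : ℕ) :
    Nat.card {a : ZMod (2 ^ (d + 3)) // a ^ 2 = 1} = 4 := by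
  set q : ℕ := 2 ^ (d + 3) with hq
  haveI : NeZero q := ⟨pow_ne_zero _ two_ne_zero⟩
  set c : ZMod q := (2 : ZMod q) ^ (d + 2) with hc
  have h0 : (2 : ZMod q) ^ (d + 3) = 0 := by
    have := ZMod.natCast_self q
    rw [hq] at this
    push_cast at this
    exact this
  have h4 : 4 ≤ 2 ^ (d + 2) := by
    calc (4 : ℕ) = 2 ^ 2 := by norm_num
    _ ≤ 2 ^ (d + 2) := Nat.pow_le_pow_right (by norm_num) (by omega)
  have hcnat : c = ((2 ^ (d + 2) : ℕ) : ZMod q) := by push_cast; rfl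
  have hc0 : c ≠ 0 := by
    rw [hcnat, Ne, ZMod.natCast_eq_zero_iff]
    intro h
    have := Nat.le_of_dvd (by positivity) h
    have : (2:ℕ) ^ (d + 3) = 2 * 2 ^ (d + 2) := by ring
    omega
  have h20 : (2 : ZMod q) ≠ 0 := by
    rw [show (2 : ZMod q) = ((2 : ℕ) : ZMod q) by push_cast; rfl, Ne,
      ZMod.natCast_eq_zero_iff]
    intro h
    have := Nat.le_of_dvd (by norm_num) h
    have h8 : (8:ℕ) ≤ 2 ^ (d + 3) := by
      calc (8:ℕ) = 2 ^ 3 := by norm_num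
      _ ≤ 2 ^ (d + 3) := Nat.pow_le_pow_right (by norm_num) (by omega)
    omega
  have hne11 : (1 : ZMod q) ≠ -1 := by
    intro h
    apply h20
    linear_combination h
  have hc2 : c ≠ 2 := by
    rw [hcnat, show (2 : ZMod q) = ((2 : ℕ) : ZMod q) by push_cast; rfl,
      Ne, ZMod.natCast_eq_natCast_iff']
    have hlt : 2 ^ (d + 2) < 2 ^ (d + 3) := Nat.pow_lt_pow_right (by norm_num) (by omega)
    have hlt2 : 2 < 2 ^ (d + 3) := by omega
    rw [Nat.mod_eq_of_lt hlt, Nat.mod_eq_of_lt hlt2]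
    omega
  have hcm2 : c + 2 ≠ 0 := by
    rw [hcnat, show (2 : ZMod q) = ((2 : ℕ) : ZMod q) by push_cast; rfl, ← Nat.cast_add,
      Ne, ZMod.natCast_eq_zero_iff]
    intro h
    have := Nat.le_of_dvd (by positivity) h
    have : (2:ℕ) ^ (d + 3) = 2 * 2 ^ (d + 2) := by ring
    omega
  have key : ∀ a : ZMod q, a ^ 2 = 1 ↔ a = 1 ∨ a = -1 ∨ a = 1 + c ∨ a = -1 + c := by
    intro a
    constructor
    · intro ha
      set v : ℤ := (a.val : ℤ) with hv
      have hva : ((v : ℤ) : ZMod q) = a := by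
        rw [hv, Int.cast_natCast]
        exact ZMod.natCast_rightInverse a
      have hdvd : ((2 : ℤ)) ^ (d + 3) ∣ (v - 1) * (v + 1) := by
        have : (((v - 1) * (v + 1) : ℤ) : ZMod q) = 0 := by
          push_cast [hva]
          linear_combination ha
        rw [ZMod.intCast_zmod_eq_zero_iff_dvd] at this
        exact_mod_cast this
      have hvodd : Odd v := by
        have h2 : (2 : ℤ) ∣ (v - 1) * (v + 1) :=
          dvd_trans (dvd_pow_self 2 (by omega : d + 3 ≠ 0)) hdvd
        rcases Int.even_or_odd v with ⟨t, htt⟩ | ho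
        · exfalso
          obtain ⟨w, hw⟩ := h2
          rw [htt] at hw
          have h' : 4 * (t * t) - 1 = 2 * w := by linear_combination hw
          set T := t * t with hT
          omega
        · exact ho
      obtain ⟨s, hs⟩ := hvodd
      have hdvd3 : (2 : ℤ) ^ (d + 1) ∣ s * (s + 1) := by
        have he : (v - 1) * (v + 1) = 4 * (s * (s + 1)) := by rw [hs]; ring
        have he2 : ((2:ℤ)) ^ (d + 3) = 4 * 2 ^ (d + 1) := by ring
        rw [he, he2] at hdvd
        exact (mul_dvd_mul_iff_left (by norm_num : (4:ℤ) ≠ 0)).mp hdvd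
      have h2P : Prime (2 : ℤ) := Int.prime_two
      have hstep : ∃ (e w : ℤ), (e = 1 ∨ e = -1) ∧ v = e + 2 ^ (d + 2) * w := by
        rcases Int.even_or_odd s with hse | hso
        · have hnd : ¬ (2:ℤ) ∣ s + 1 := by
            obtain ⟨t, htt⟩ := hse
            rintro ⟨w, hw⟩
            omega
          have hcop : IsCoprime ((2:ℤ) ^ (d + 1)) (s + 1) :=
            (h2P.coprime_iff_not_dvd.mpr hnd).pow_left
          obtain ⟨w, hw⟩ := hcop.dvd_of_dvd_mul_right hdvd3
          exact ⟨1, w, Or.inl rfl, by rw [hs, hw]; ring⟩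
        · have hnd : ¬ (2:ℤ) ∣ s := by
            obtain ⟨t, htt⟩ := hso
            rintro ⟨w, hw⟩
            omega
          have hcop : IsCoprime ((2:ℤ) ^ (d + 1)) s :=
            (h2P.coprime_iff_not_dvd.mpr hnd).pow_left
          obtain ⟨w, hw⟩ := hcop.dvd_of_dvd_mul_left hdvd3
          exact ⟨-1, w, Or.inr rfl, by
            have : s = 2 ^ (d+1) * w - 1 := by omega
            rw [hs, this]; ring⟩
      obtain ⟨e, w, he, hvw⟩ := hstep
      rcases Int.even_or_odd w with ⟨u, hu⟩ | ⟨u, hu⟩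
      · have hav : a = ((e : ℤ) : ZMod q) := by
          rw [← hva, hvw, hu]
          push_cast
          rw [show ((2:ZMod q) ^ (d + 2) * (u + u)) = (2:ZMod q) ^ (d+3) * u by ring, h0]
          ring
        rcases he with rfl | rfl
        · left; rw [hav]; push_cast; ring
        · right; left; rw [hav]; push_cast; ring
      · have hav : a = ((e : ℤ) : ZMod q) + c := by
          rw [← hva, hvw, hu]
          push_cast
          rw [show ((2:ZMod q) ^ (d + 2) * (2 * u + 1))
            = (2:ZMod q) ^ (d+3) * u + (2:ZMod q) ^ (d+2) by ring, h0, hc]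
          ring
        rcases he with rfl | rfl
        · right; right; left; rw [hav]; push_cast; ring
        · right; right; right; rw [hav]; push_cast; ring
    · have hsq : c ^ 2 = 0 := by
        rw [hc, show ((2:ZMod q) ^ (d+2)) ^ 2 = (2:ZMod q)^(d+3) * 2^(d+1) by ring, h0]
        ring
      have h2c : 2 * c = 0 := by
        rw [hc, show (2 : ZMod q) * (2:ZMod q)^(d+2) = (2:ZMod q)^(d+3) by ring, h0]
      rintro (rfl | rfl | rfl | rfl)
      · ring
      · ring
      · linear_combination hsq + h2c
      · linear_combination hsq - h2c
  calc Nat.card {a : ZMod q // a ^ 2 = 1}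
      = Nat.card {a : ZMod q // a = 1 ∨ a = -1 ∨ a = 1 + c ∨ a = -1 + c} :=
        Nat.card_congr (Equiv.subtypeEquivRight key)
  _ = Set.ncard ({1, -1, 1 + c, -1 + c} : Set (ZMod q)) := (Nat.card_coe_set_eq _)
  _ = 4 := by
      rw [Set.ncard_insert_of_notMem (by
          simp only [Set.mem_insert_iff, Set.mem_singleton_iff]
          push_neg
          refine ⟨hne11, fun h => hc0 (by linear_combination -h), fun h => hc2 (by linear_combination -h)⟩)
        (Set.toFinite _),
        Set.ncard_insert_of_notMem (by
          simp only [Set.mem_insert_iff, Set.mem_singleton_iff]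
          push_neg
          refine ⟨fun h => hcm2 (by linear_combination -h), fun h => hc0 (by linear_combination -h)⟩)
        (Set.toFinite _),
        Set.ncard_insert_of_notMem (by
          simp only [Set.mem_singleton_iff]
          intro h
          exact hne11 (by linear_combination h))
        (Set.toFinite _),
        Set.ncard_singleton]

end SQAux
namespace SQAux

theorem card_torsion_two_ge3 {n : ℕ} (hn : 3 ≤ n) :
    Nat.card {a : ZMod (2 ^ n) // a ^ 2 = 1} = 4 := by
  obtain ⟨d, rfl⟩ : ∃ d, n = d + 3 := ⟨n - 3, by omega⟩
  exact card_torsion_two_big d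

theorem Ncard_odd_pow {p : ℕ} (hp : p.Prime) (hodd : Odd p) : ∀ k, Ncard (p ^ k) = 2 * k + 1
  | 0 => by simpa using Ncard_one
  | (k + 1) => by
      rw [Ncard_step hp, card_torsion_odd hp hodd, Ncard_odd_pow hp hodd k]
      ring

theorem Ncard_two_1 : Ncard (2 ^ 1) = 2 := by
  have h := Ncard_step (p := 2) (k := 0) Nat.prime_two
  have ht : Nat.card {a : ZMod (2 ^ (0 + 1)) // a ^ 2 = 1} = 1 := card_torsion_two_1
  have h1 : Ncard (2 ^ 0) = 1 := Ncard_one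
  rw [ht, h1] at h
  exact h.trans (by norm_num)

theorem Ncard_two_2 : Ncard (2 ^ 2) = 4 := by
  have h := Ncard_step (p := 2) (k := 1) Nat.prime_two
  have ht : Nat.card {a : ZMod (2 ^ (1 + 1)) // a ^ 2 = 1} = 2 := card_torsion_two_2
  rw [ht, Ncard_two_1] at h
  exact h.trans (by norm_num)

theorem Ncard_two_big : ∀ d, Ncard (2 ^ (d + 3)) = 4 * (d + 2)
  | 0 => by
      have h := Ncard_step (p := 2) (k := 2) Nat.prime_two
      have ht : Nat.card {a : ZMod (2 ^ (2 + 1)) // a ^ 2 = 1} = 4 :=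
        card_torsion_two_ge3 (by norm_num)
      rw [ht, Ncard_two_2] at h
      exact h.trans (by norm_num)
  | (d + 1) => by
      have h := Ncard_step (p := 2) (k := d + 3) Nat.prime_two
      have ht : Nat.card {a : ZMod (2 ^ (d + 3 + 1)) // a ^ 2 = 1} = 4 :=
        card_torsion_two_ge3 (by omega)
      rw [ht, Ncard_two_big d] at h
      have he : d + 1 + 3 = d + 3 + 1 := by omega
      rw [he, h]
      ring

theorem Ncard_two_pow (k : ℕ) :
    Ncard (2 ^ k) =
      if k = 0 then 1 else if k = 1 then 2 else if k = 2 then 4 else 4 * (k - 1) := by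
  match k with
  | 0 => simpa using Ncard_one
  | 1 => simpa using Ncard_two_1
  | 2 => simpa using Ncard_two_2
  | (d + 3) =>
      rw [Ncard_two_big d, if_neg (by omega), if_neg (by omega), if_neg (by omega)]
      omega

end SQAux

theorem card_sqRel_classes (n : ℕ) (hn : 1 ≤ n) (k₀ l : ℕ)
    (p : Fin l → ℕ) (K : Fin l → ℕ)
    (hp : ∀ i, (p i).Prime) (hodd : ∀ i, Odd (p i))
    (hinj : Function.Injective p)
    (hK : ∀ i, 1 ≤ K i)
    (hfact : n = 2 ^ k₀ * ∏ i, p i ^ K i) :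
    Nat.card (Quot (sqRel n)) =
      (if k₀ = 0 then 1
        else if k₀ = 1 then 2
        else if k₀ = 2 then 4
        else 4 * (k₀ - 1)) * ∏ i, (2 * K i + 1) := by
  have hrw : Nat.card (Quot (sqRel n)) = SQAux.Ncard n := rfl
  rw [hrw]
  subst hfact
  have hcop : (2 ^ k₀).Coprime (∏ i, p i ^ K i) := by
    apply Nat.Coprime.pow_left
    apply Nat.Coprime.prod_right
    intro i _
    apply Nat.Coprime.pow_right
    rw [Nat.Prime.coprime_iff_not_dvd Nat.prime_two]
    have := Nat.odd_iff.mp (hodd i)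
    omega
  have hpair : (↑(Finset.univ : Finset (Fin l)) : Set (Fin l)).Pairwise
      fun i j => ((fun i => p i ^ K i) i).Coprime ((fun i => p i ^ K i) j) := by
    intro i _ j _ hij
    exact Nat.Coprime.pow _ _ ((Nat.coprime_primes (hp i) (hp j)).mpr fun h => hij (hinj h))
  rw [SQAux.Ncard_mul hcop, SQAux.Ncard_prod Finset.univ _ hpair, SQAux.Ncard_two_pow k₀]
  congr 1
  apply Finset.prod_congr rfl
  intro i _
  exact SQAux.Ncard_odd_pow (hp i) (hodd i) (K i)
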